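/- Let μ be a Borel measure on a compact set Ω ⊂ ℝⁿ×ℝ with nonempty interior (so that M_t(μ) is positive definite for all t), and let φ be the marginal of μ on ℝⁿ. Then for every fixed x ∈ ℝⁿ and t ∈ ℕ, the function y ↦ p_t(y; x) := Λ^μ_t(x,y)^{-1} / Λ^φ_t(x)^{-1} = Λ^φ_t(x)/Λ^μ_t(x,y) is a univariate polynomial in y of degree at most 2t, is a sum of squares of univariate polynomials, and satisfies p_t(y; x) ≥ 1 for all y ∈ ℝ. -/

import Mathlib

open MeasureTheory Matrix

noncomputable section

/-- Multi-indices `α ∈ ℕⁿ` with `|α| ≤ t`, encoded with entries in `Fin (t+1)`. -/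
def MIdx (n t : ℕ) : Type :=
  {α : Fin n → Fin (t + 1) // (∑ i, ((α i : ℕ))) ≤ t}

instance (n t : ℕ) : Fintype (MIdx n t) := by unfold MIdx; infer_instance

instance (n t : ℕ) : DecidableEq (MIdx n t) := by unfold MIdx; infer_instance

/-- The monomial `x^α`. -/
def mon {n t : ℕ} (x : Fin n → ℝ) (α : MIdx n t) : ℝ :=
  ∏ i, x i ^ ((α.1 i : ℕ))

/-- Joint multi-indices `(α, k) ∈ ℕⁿ × ℕ` with `|α| + k ≤ t`, indexing the monomials
`x^α y^k` of degree at most `t` on `ℝⁿ × ℝ`. -/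
def XYIdx (n t : ℕ) : Type :=
  {ak : (Fin n → Fin (t + 1)) × Fin (t + 1) //
    (∑ i, ((ak.1 i : ℕ))) + (ak.2 : ℕ) ≤ t}

instance (n t : ℕ) : Fintype (XYIdx n t) := by unfold XYIdx; infer_instance

instance (n t : ℕ) : DecidableEq (XYIdx n t) := by unfold XYIdx; infer_instance

/-- The monomial `x^α y^k`. -/
def monXY {n t : ℕ} (x : Fin n → ℝ) (y : ℝ) (γ : XYIdx n t) : ℝ :=
  (∏ i, x i ^ ((γ.1.1 i : ℕ))) * y ^ ((γ.1.2 : ℕ))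

/-- The moment matrix `M_t(μ)` of a measure `μ` on `ℝⁿ × ℝ`. -/
def momMatXY (n t : ℕ) (μ : Measure ((Fin n → ℝ) × ℝ)) :
    Matrix (XYIdx n t) (XYIdx n t) ℝ :=
  fun γ δ => ∫ z, monXY z.1 z.2 γ * monXY z.1 z.2 δ ∂μ

/-- The moment matrix `M_t(φ)` of a measure `φ` on `ℝⁿ`. -/
def momMatX (n t : ℕ) (φ : Measure (Fin n → ℝ)) : Matrix (MIdx n t) (MIdx n t) ℝ :=
  fun α β => ∫ x, mon x α * mon x β ∂φ

/-- Evaluation at `y` of the univariate polynomial with coefficient vector `c`. -/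
def evalU {m : ℕ} (c : Fin (m + 1) → ℝ) (y : ℝ) : ℝ :=
  ∑ i, c i * y ^ (i : ℕ)

/-- Cauchy–Schwarz for a positive semidefinite real matrix. -/
lemma csPSD {I : Type*} [Fintype I] (M : Matrix I I ℝ) (hM : M.PosSemidef)
    (hsym : ∀ u v : I → ℝ, u ⬝ᵥ M *ᵥ v = v ⬝ᵥ M *ᵥ u) (a b : I → ℝ) :
    (a ⬝ᵥ M *ᵥ b) ^ 2 ≤ (a ⬝ᵥ M *ᵥ a) * (b ⬝ᵥ M *ᵥ b) := by
  have key : ∀ s : ℝ, 0 ≤ (b ⬝ᵥ M *ᵥ b) * (s * s) + (2 * (a ⬝ᵥ M *ᵥ b)) * s + (a ⬝ᵥ M *ᵥ a) := by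
    intro s
    have h0 : (0 : ℝ) ≤ (a + s • b) ⬝ᵥ M *ᵥ (a + s • b) := by
      have := hM.dotProduct_mulVec_nonneg (a + s • b); simpa using this
    have hexp : (a + s • b) ⬝ᵥ M *ᵥ (a + s • b)
        = (b ⬝ᵥ M *ᵥ b) * (s * s) + (2 * (a ⬝ᵥ M *ᵥ b)) * s + (a ⬝ᵥ M *ᵥ a) := by
      rw [mulVec_add, mulVec_smul, dotProduct_add, add_dotProduct, add_dotProduct,
        dotProduct_smul, smul_dotProduct, smul_dotProduct, hsym b a]
      simp only [dotProduct_smul, smul_eq_mul]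
      ring
    linarith [hexp ▸ h0]
  have hd := discrim_le_zero key
  rw [discrim] at hd
  nlinarith [hd]

/-- Summation against a lifted (extended-by-zero) vector. -/
lemma lift_sum {I J : Type*} [Fintype I] [Fintype J] [DecidableEq J] (ι : I → J)
    (u : I → ℝ) (f : J → ℝ) :
    (∑ γ, (∑ α, if γ = ι α then u α else 0) * f γ) = ∑ α, u α * f (ι α) := by
  simp only [Finset.sum_mul]
  rw [Finset.sum_comm]
  refine Finset.sum_congr rfl fun α _ => ?_
  simp [ite_mul, Finset.sum_ite_eq']

lemma lift_dot {I J : Type*} [Fintype I] [Fintype J] [DecidableEq J] (ι : I → J)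
    (M : Matrix J J ℝ) (u : I → ℝ) :
    (fun γ => ∑ α, if γ = ι α then u α else 0) ⬝ᵥ M *ᵥ (fun γ => ∑ α, if γ = ι α then u α else 0)
      = u ⬝ᵥ (M.submatrix ι ι) *ᵥ u := by
  set w : J → ℝ := fun γ => ∑ α, if γ = ι α then u α else 0 with hw
  calc w ⬝ᵥ M *ᵥ w = ∑ α, u α * (M *ᵥ w) (ι α) := lift_sum ι u (M *ᵥ w)
    _ = ∑ α, u α * ∑ β, u β * M (ι α) (ι β) := by
        refine Finset.sum_congr rfl fun α _ => ?_
        congr 1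
        calc (M *ᵥ w) (ι α) = ∑ δ, M (ι α) δ * w δ := rfl
          _ = ∑ δ, w δ * M (ι α) δ := by simp [mul_comm]
          _ = ∑ β, u β * M (ι α) (ι β) := lift_sum ι u (fun δ => M (ι α) δ)
    _ = u ⬝ᵥ (M.submatrix ι ι) *ᵥ u := by
        show (∑ α, u α * ∑ β, u β * M (ι α) (ι β))
            = ∑ α, u α * ∑ β, M (ι α) (ι β) * u β
        refine Finset.sum_congr rfl fun α _ => ?_
        congr 1
        exact Finset.sum_congr rfl fun β _ => mul_comm _ _

lemma mon_continuous {n t : ℕ} (α : MIdx n t) : Continuous fun x : Fin n → ℝ => mon x α :=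
  continuous_finset_prod _ fun i _ => (continuous_apply i).pow _

open scoped MatrixOrder in
lemma psd_eq_conjTranspose_mul_self {I : Type*} [Fintype I] [DecidableEq I]
    {A : Matrix I I ℝ} (hA : A.PosSemidef) : ∃ B : Matrix I I ℝ, A = Bᴴ * B := by
  obtain ⟨B, hB⟩ := CStarAlgebra.nonneg_iff_eq_star_mul_self.mp hA.nonneg
  exact ⟨B, hB⟩

/-- Let `μ` be a Borel measure on a compact set `Ω ⊆ ℝⁿ × ℝ` with nonempty interior (so
that `M_t(μ)` is positive definite for all `t`) and `φ` its marginal on `ℝⁿ`.  For every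
fixed `x ∈ ℝⁿ` and `t ∈ ℕ`, the function
`y ↦ p_t(y; x) := Λ^μ_t(x,y)⁻¹ / Λ^φ_t(x)⁻¹` is a univariate polynomial in `y` of degree
at most `2t`, is a sum of squares of univariate polynomials, and satisfies
`p_t(y; x) ≥ 1` for all `y ∈ ℝ`. -/
theorem stmt10 (n : ℕ) (Ω : Set ((Fin n → ℝ) × ℝ))
    (hΩc : IsCompact Ω) (hΩi : (interior Ω).Nonempty)
    (μ : Measure ((Fin n → ℝ) × ℝ)) [IsFiniteMeasure μ] (hsupp : μ Ωᶜ = 0)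
    (hPD : ∀ s : ℕ, (momMatXY n s μ).PosDef)
    (x : Fin n → ℝ) (t : ℕ) :
    ∃ c : Fin (2 * t + 1) → ℝ,
      -- `p_t(·; x)` is a polynomial in `y` of degree at most `2t`
      (∀ y : ℝ,
        (monXY x y ⬝ᵥ (momMatXY n t μ)⁻¹.mulVec (monXY x y)) /
          (mon x ⬝ᵥ (momMatX n t (μ.map Prod.fst))⁻¹.mulVec (mon x))
        = evalU c y) ∧
      -- it is a sum of squares of univariate polynomials
      (∃ (k : ℕ) (q : Fin k → Fin (t + 1) → ℝ),
        ∀ y : ℝ, evalU c y = ∑ j, (evalU (q j) y) ^ 2) ∧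
      -- and it is bounded below by 1
      (∀ y : ℝ, 1 ≤ evalU c y) := by
  classical
  have hM : (momMatXY n t μ).PosDef := hPD t
  set M := momMatXY n t μ with hMdef
  set Mφ := momMatX n t (μ.map Prod.fst) with hMφdef
  -- symmetry of M and M⁻¹
  have hT : Mᵀ = M := by have := hM.1; simpa [Matrix.IsHermitian] using this
  have hsym : ∀ (A : Matrix (XYIdx n t) (XYIdx n t) ℝ), Aᵀ = A →
      ∀ u v : XYIdx n t → ℝ, u ⬝ᵥ A *ᵥ v = v ⬝ᵥ A *ᵥ u := by
    intro A hA u v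
    rw [dotProduct_mulVec, ← transpose_transpose A, vecMul_transpose, transpose_transpose, hA,
      dotProduct_comm]
  -- the embedding of MIdx into XYIdx
  let ι : MIdx n t → XYIdx n t := fun α => ⟨(α.1, 0), by simpa using α.2⟩
  have hmonι : ∀ (z : (Fin n → ℝ) × ℝ) (α : MIdx n t), monXY z.1 z.2 (ι α) = mon z.1 α := by
    intro z α; simp [monXY, mon, ι]
  have hsub : Mφ = M.submatrix ι ι := by
    ext α β
    show (∫ x, mon x α * mon x β ∂(μ.map Prod.fst)) = ∫ z, monXY z.1 z.2 (ι α) * monXY z.1 z.2 (ι β) ∂μ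
    rw [integral_map measurable_fst.aemeasurable (f := fun x => mon x α * mon x β)
      ((mon_continuous α).mul (mon_continuous β)).aestronglyMeasurable]
    exact integral_congr_ae (Filter.Eventually.of_forall fun z => by simp only [hmonι])
  -- Mφ is positive definite
  have hMφPD : Mφ.PosDef := by
    rw [hsub]
    refine Matrix.PosDef.of_dotProduct_mulVec_pos ?_ ?_
    · exact hM.1.submatrix ι
    · intro u hu
      have hwu : (fun γ => ∑ α, if γ = ι α then u α else 0) ≠ 0 := by
        intro h0
        apply hu
        ext α
        have := congrFun h0 (ι α)
        simp only [Pi.zero_apply] at this ⊢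
        rw [← this]
        rw [Finset.sum_eq_single α]
        · simp
        · intro β _ hβ
          rw [if_neg]
          intro hEq
          exact hβ (Subtype.ext (congrArg Prod.fst (congrArg Subtype.val hEq))).symm
        · intro h; exact absurd (Finset.mem_univ _) h
      have := hM.dotProduct_mulVec_pos hwu
      rw [show star (fun γ => ∑ α, if γ = ι α then u α else 0)
          = (fun γ => ∑ α, if γ = ι α then u α else 0) from rfl] at this
      rw [lift_dot ι M u] at this
      simpa using this
  have hdetM : IsUnit M.det := (ne_of_gt hM.det_pos).isUnit
  have hdetMφ : IsUnit Mφ.det := (ne_of_gt hMφPD.det_pos).isUnit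
  have hTφ : Mφᵀ = Mφ := by have := hMφPD.1; simpa [Matrix.IsHermitian] using this
  -- the x-marginal Christoffel value d
  set u : MIdx n t → ℝ := Mφ⁻¹ *ᵥ mon x with hu
  set d : ℝ := mon x ⬝ᵥ Mφ⁻¹ *ᵥ mon x with hd
  have hmx : (mon x : MIdx n t → ℝ) ≠ 0 := by
    intro h
    have h1 : mon x ⟨fun _ => (0 : Fin (t+1)), by simp⟩ = 1 := by simp [mon]
    rw [h] at h1
    exact zero_ne_one h1
  have hdpos : 0 < d := by
    have := hM  -- keep
    have h2 := (hMφPD.inv).dotProduct_mulVec_pos hmx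
    simpa [hd] using h2
  -- key inequality : d ≤ N y
  have hkey : ∀ y : ℝ, d ≤ monXY x y ⬝ᵥ M⁻¹ *ᵥ monXY x y := by
    intro y
    set w : XYIdx n t → ℝ := fun γ => ∑ α, if γ = ι α then u α else 0 with hwdef
    have h1 : w ⬝ᵥ monXY x y = d := by
      calc w ⬝ᵥ monXY x y = ∑ α, u α * monXY x y (ι α) := lift_sum ι u (monXY x y)
        _ = ∑ α, u α * mon x α := Finset.sum_congr rfl fun α _ => by
            rw [hmonι (x, y) α]
        _ = u ⬝ᵥ mon x := rfl
        _ = d := by rw [hu, hd, dotProduct_comm]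
    have h2 : w ⬝ᵥ M *ᵥ w = d := by
      rw [hwdef, lift_dot ι M u, ← hsub, hu]
      have : Mφ *ᵥ Mφ⁻¹ *ᵥ mon x = mon x := by
        rw [mulVec_mulVec, Matrix.mul_nonsing_inv _ hdetMφ, one_mulVec]
      calc (Mφ⁻¹ *ᵥ mon x) ⬝ᵥ Mφ *ᵥ (Mφ⁻¹ *ᵥ mon x)
          = (Mφ⁻¹ *ᵥ mon x) ⬝ᵥ mon x := by rw [this]
        _ = mon x ⬝ᵥ Mφ⁻¹ *ᵥ mon x := dotProduct_comm _ _
    have hcs := csPSD M hM.posSemidef (hsym M hT) w (M⁻¹ *ᵥ monXY x y)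
    have hMv : M *ᵥ (M⁻¹ *ᵥ monXY x y) = monXY x y := by
      rw [mulVec_mulVec, Matrix.mul_nonsing_inv _ hdetM, one_mulVec]
    rw [hMv, h1, h2] at hcs
    have h3 : (M⁻¹ *ᵥ monXY x y) ⬝ᵥ monXY x y = monXY x y ⬝ᵥ M⁻¹ *ᵥ monXY x y :=
      dotProduct_comm _ _
    rw [h3] at hcs
    nlinarith [hcs, hdpos]
  -- square-root factorization of M⁻¹
  obtain ⟨B, hB⟩ : ∃ B : Matrix (XYIdx n t) (XYIdx n t) ℝ, M⁻¹ = Bᴴ * B := by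
    exact psd_eq_conjTranspose_mul_self hM.inv.posSemidef
  have hN : ∀ y : ℝ, monXY x y ⬝ᵥ M⁻¹ *ᵥ monXY x y = ∑ j, ((B *ᵥ monXY x y) j) ^ 2 := by
    intro y
    rw [hB, ← mulVec_mulVec, dotProduct_mulVec, vecMul_conjTranspose]
    simp [dotProduct, sq]
  -- the coefficient vectors of the squares
  set q : XYIdx n t → Fin (t + 1) → ℝ := fun j i =>
    (∑ γ : XYIdx n t, if γ.1.2 = i then B j γ * ∏ i', x i' ^ ((γ.1.1 i' : ℕ)) else 0)
      / Real.sqrt d with hq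
  have heval : ∀ (j : XYIdx n t) (y : ℝ),
      evalU (q j) y = (B *ᵥ monXY x y) j / Real.sqrt d := by
    intro j y
    unfold evalU
    simp only [hq, div_mul_eq_mul_div, ← Finset.sum_div]
    congr 1
    have : (B *ᵥ monXY x y) j = ∑ γ, B j γ * monXY x y γ := rfl
    rw [this]
    simp only [Finset.sum_mul]
    rw [Finset.sum_comm]
    refine Finset.sum_congr rfl fun γ _ => ?_
    simp only [ite_mul, zero_mul, Finset.sum_ite_eq, Finset.mem_univ, if_true]
    rw [monXY]
    ring
  have hsq : ∀ y : ℝ, ∑ j, (evalU (q j) y) ^ 2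
      = (monXY x y ⬝ᵥ M⁻¹ *ᵥ monXY x y) / d := by
    intro y
    rw [hN y, Finset.sum_div]
    refine Finset.sum_congr rfl fun j _ => ?_
    rw [heval, div_pow, Real.sq_sqrt hdpos.le]
  -- the coefficient vector c
  set c : Fin (2 * t + 1) → ℝ := fun m =>
    ∑ j : XYIdx n t, ∑ i : Fin (t + 1), ∑ i' : Fin (t + 1),
      if (i : ℕ) + (i' : ℕ) = (m : ℕ) then q j i * q j i' else 0 with hc
  have hkeym : ∀ (y r : ℝ) (i i' : Fin (t + 1)),
      (∑ m : Fin (2 * t + 1), (if (i : ℕ) + (i' : ℕ) = (m : ℕ) then r else 0) * y ^ (m : ℕ))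
        = r * y ^ ((i : ℕ) + (i' : ℕ)) := by
    intro y r i i'
    have hlt : (i : ℕ) + (i' : ℕ) < 2 * t + 1 := by
      have h1 := i.is_le; have h2 := i'.is_le; omega
    rw [Finset.sum_eq_single (⟨(i : ℕ) + (i' : ℕ), hlt⟩ : Fin (2 * t + 1))]
    · simp
    · intro m _ hm
      rw [if_neg, zero_mul]
      intro hEq
      exact hm (Fin.val_injective hEq.symm)
    · intro h; exact absurd (Finset.mem_univ _) h
  have hcval : ∀ y : ℝ, evalU c y = ∑ j, (evalU (q j) y) ^ 2 := by
    intro y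
    unfold evalU
    simp only [hc, Finset.sum_mul]
    rw [Finset.sum_comm]
    refine Finset.sum_congr rfl fun j _ => ?_
    rw [Finset.sum_comm, sq, Finset.sum_mul_sum]
    refine Finset.sum_congr rfl fun i _ => ?_
    rw [Finset.sum_comm]
    refine Finset.sum_congr rfl fun i' _ => ?_
    rw [hkeym y (q j i * q j i') i i', pow_add]
    ring
  refine ⟨c, ?_, ?_, ?_⟩
  · intro y
    rw [hcval y, hsq y]
  · refine ⟨Fintype.card (XYIdx n t),
      fun j => q ((Fintype.equivFin (XYIdx n t)).symm j), fun y => ?_⟩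
    rw [hcval y]
    exact Fintype.sum_equiv (Fintype.equivFin (XYIdx n t)) _ _ fun j => by simp
  · intro y
    rw [hcval y, hsq y]
    rw [one_le_div hdpos]
    exact hkey y
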